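/- Let (a_n) and (b_n) be sequences of real numbers with a_n > 0 for every n. If b_n/a_n converges monotonically to a limit L ∈ ℝ, and sup_n (1/n) Σ_{k=1}^n |a_{k+1} - a_k| < ∞, then lim_{n→∞} (1/n) Σ_{k=1}^n |(b_{k+1} - b_k) - L(a_{k+1} - a_k)| = 0. -/

import Mathlib

open Filter Finset

private lemma sum_Icc_one_eq_range (f : ℕ → ℝ) (n : ℕ) :
    ∑ k ∈ Icc 1 n, f k = ∑ i ∈ range n, f (i + 1) := by
  induction n with
  | zero => simp
  | succ n ih => rw [Finset.sum_Icc_succ_top (by omega), Finset.sum_range_succ, ih]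

private lemma sum_dc (c : ℕ → ℝ) (n : ℕ) :
    ∑ k ∈ Icc 1 n, (c (k + 1) - c k) = c (n + 1) - c 1 := by
  induction n with
  | zero => simp
  | succ n ih => rw [Finset.sum_Icc_succ_top (by omega), ih]; ring

private lemma sum_dc_mul (c : ℕ → ℝ) (n : ℕ) :
    ∑ k ∈ Icc 1 n, (c (k + 1) - c k) * (k : ℝ)
      = (n : ℝ) * c (n + 1) - ∑ k ∈ Icc 1 n, c k := by
  induction n with
  | zero => simp
  | succ n ih =>
    rw [Finset.sum_Icc_succ_top (by omega), Finset.sum_Icc_succ_top (by omega), ih]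
    push_cast
    ring

private lemma aux (a c : ℕ → ℝ) (ha : ∀ n, 0 < a n) (hc : Monotone c)
    (hc0 : Tendsto c atTop (nhds 0)) (C : ℝ)
    (hS : ∀ n : ℕ, 0 < n → ∑ k ∈ Icc 1 n, |a (k + 1) - a k| ≤ C * n) :
    Tendsto (fun n : ℕ => (1 / (n : ℝ)) *
      ∑ k ∈ Icc 1 n, |c (k + 1) * a (k + 1) - c k * a k|) atTop (nhds 0) := by
  have hcle : ∀ k, c k ≤ 0 := fun k => hc.ge_of_tendsto hc0 k
  have hdc : ∀ k, 0 ≤ c (k + 1) - c k := fun k => sub_nonneg.2 (hc (Nat.le_succ k))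
  -- upper bound on a (k+1)
  have haU : ∀ k : ℕ, 0 < k → a (k + 1) ≤ a 1 + C * k := by
    intro k hk
    have htel : ∑ j ∈ Icc 1 k, (a (j + 1) - a j) = a (k + 1) - a 1 := sum_dc a k
    have h1 : ∑ j ∈ Icc 1 k, (a (j + 1) - a j) ≤ ∑ j ∈ Icc 1 k, |a (j + 1) - a j| :=
      Finset.sum_le_sum fun j _ => le_abs_self _
    have h2 := hS k hk
    linarith
  -- part B estimate by induction
  have hB : ∀ n : ℕ,
      ∑ k ∈ Icc 1 n, (-c k) * |a (k + 1) - a k|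
        ≤ C * ∑ k ∈ Icc 1 n, (c (k + 1) - c k) * (k : ℝ)
          + (-c (n + 1)) * ∑ k ∈ Icc 1 n, |a (k + 1) - a k| := by
    intro n
    induction n with
    | zero => simp
    | succ n ih =>
      rw [Finset.sum_Icc_succ_top (by omega), Finset.sum_Icc_succ_top (by omega),
        Finset.sum_Icc_succ_top (by omega)]
      have hSn : ∑ k ∈ Icc 1 (n + 1), |a (k + 1) - a k| ≤ C * ((n : ℝ) + 1) := by
        have := hS (n + 1) (by omega)
        push_cast at this
        linarith
      rw [Finset.sum_Icc_succ_top (by omega)] at hSn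
      have hkey : (c (n + 2) - c (n + 1)) *
          ((∑ k ∈ Icc 1 n, |a (k + 1) - a k|) + |a (n + 2) - a (n + 1)|)
            ≤ (c (n + 2) - c (n + 1)) * (C * ((n : ℝ) + 1)) :=
        mul_le_mul_of_nonneg_left hSn (hdc (n + 1))
      push_cast
      nlinarith [hkey]
  -- per-term bound
  have hterm : ∀ k : ℕ, 0 < k →
      |c (k + 1) * a (k + 1) - c k * a k|
        ≤ (c (k + 1) - c k) * a (k + 1) + (-c k) * |a (k + 1) - a k| := by
    intro k _
    have e : c (k + 1) * a (k + 1) - c k * a k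
        = (c (k + 1) - c k) * a (k + 1) + c k * (a (k + 1) - a k) := by ring
    calc |c (k + 1) * a (k + 1) - c k * a k|
        ≤ |(c (k + 1) - c k) * a (k + 1)| + |c k * (a (k + 1) - a k)| := by
          rw [e]; exact abs_add_le _ _
      _ = (c (k + 1) - c k) * a (k + 1) + (-c k) * |a (k + 1) - a k| := by
          rw [abs_of_nonneg (mul_nonneg (hdc k) (ha _).le), abs_mul,
            abs_of_nonpos (hcle k)]
  -- part A estimate
  have hA : ∀ n : ℕ,
      ∑ k ∈ Icc 1 n, (c (k + 1) - c k) * a (k + 1)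
        ≤ a 1 * (c (n + 1) - c 1) + C * ∑ k ∈ Icc 1 n, (c (k + 1) - c k) * (k : ℝ) := by
    intro n
    have h1 : ∑ k ∈ Icc 1 n, (c (k + 1) - c k) * a (k + 1)
        ≤ ∑ k ∈ Icc 1 n, (c (k + 1) - c k) * (a 1 + C * k) := by
      apply Finset.sum_le_sum
      intro k hk
      have hk1 : 0 < k := (Finset.mem_Icc.1 hk).1
      exact mul_le_mul_of_nonneg_left (haU k hk1) (hdc k)
    have h2 : ∑ k ∈ Icc 1 n, (c (k + 1) - c k) * (a 1 + C * k)
        = a 1 * (∑ k ∈ Icc 1 n, (c (k + 1) - c k))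
          + C * ∑ k ∈ Icc 1 n, (c (k + 1) - c k) * (k : ℝ) := by
      rw [Finset.mul_sum, Finset.mul_sum, ← Finset.sum_add_distrib]
      exact Finset.sum_congr rfl fun k _ => by ring
    rw [h2, sum_dc c n] at h1
    exact h1
  -- define upper bound g
  set g : ℕ → ℝ := fun n =>
    (1 / (n : ℝ)) * (a 1 * (c (n + 1) - c 1))
      + 2 * C * (c (n + 1) - (1 / (n : ℝ)) * ∑ k ∈ Icc 1 n, c k)
      + C * (-c (n + 1)) with hg
  have hcsucc : Tendsto (fun n : ℕ => c (n + 1)) atTop (nhds 0) :=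
    hc0.comp (tendsto_add_atTop_nat 1)
  have hces : Tendsto (fun n : ℕ => (1 / (n : ℝ)) * ∑ k ∈ Icc 1 n, c k) atTop (nhds 0) := by
    have := hcsucc.cesaro
    have heq : (fun n : ℕ => (1 / (n : ℝ)) * ∑ k ∈ Icc 1 n, c k)
        = fun n : ℕ => ((n : ℝ)⁻¹) * ∑ i ∈ range n, c (i + 1) := by
      funext n
      rw [one_div, sum_Icc_one_eq_range]
    rw [heq]
    exact this
  have hgl : Tendsto g atTop (nhds 0) := by
    have t1 : Tendsto (fun n : ℕ => (1 / (n : ℝ)) * (a 1 * (c (n + 1) - c 1)))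
        atTop (nhds (0 * (a 1 * (0 - c 1)))) :=
      tendsto_one_div_atTop_nhds_zero_nat.mul
        ((tendsto_const_nhds.mul (hcsucc.sub tendsto_const_nhds)))
    have t2 : Tendsto (fun n : ℕ =>
        2 * C * (c (n + 1) - (1 / (n : ℝ)) * ∑ k ∈ Icc 1 n, c k))
        atTop (nhds (2 * C * (0 - 0))) :=
      tendsto_const_nhds.mul (hcsucc.sub hces)
    have t3 : Tendsto (fun n : ℕ => C * (-c (n + 1))) atTop (nhds (C * (-0))) :=
      tendsto_const_nhds.mul hcsucc.neg
    have h0 : (0 : ℝ) = 0 * (a 1 * (0 - c 1)) + 2 * C * (0 - 0) + C * (-0) := by ring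
    rw [hg, h0]
    exact (t1.add t2).add t3
  -- squeeze
  apply squeeze_zero' (g := g)
  · filter_upwards with n
    exact mul_nonneg (by positivity) (Finset.sum_nonneg fun k _ => abs_nonneg _)
  · filter_upwards [eventually_ge_atTop 1] with n hn
    have hn0 : (0 : ℝ) < n := by exact_mod_cast hn
    have hsum : ∑ k ∈ Icc 1 n, |c (k + 1) * a (k + 1) - c k * a k|
        ≤ a 1 * (c (n + 1) - c 1)
          + 2 * C * ((n : ℝ) * c (n + 1) - ∑ k ∈ Icc 1 n, c k)
          + (-c (n + 1)) * (C * n) := by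
      have hb1 : ∑ k ∈ Icc 1 n, |c (k + 1) * a (k + 1) - c k * a k|
          ≤ ∑ k ∈ Icc 1 n, ((c (k + 1) - c k) * a (k + 1) + (-c k) * |a (k + 1) - a k|) := by
        apply Finset.sum_le_sum
        intro k hk
        exact hterm k (Finset.mem_Icc.1 hk).1
      rw [Finset.sum_add_distrib] at hb1
      have hb2 := hA n
      have hb3 := hB n
      have hb4 : (-c (n + 1)) * ∑ k ∈ Icc 1 n, |a (k + 1) - a k|
          ≤ (-c (n + 1)) * (C * n) :=
        mul_le_mul_of_nonneg_left (hS n hn) (by linarith [hcle (n + 1)])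
      have hK := sum_dc_mul c n
      rw [hK] at hb2 hb3
      linarith
    have h1n : (1 / (n : ℝ)) * (n : ℝ) = 1 := by field_simp
    calc (1 / (n : ℝ)) * ∑ k ∈ Icc 1 n, |c (k + 1) * a (k + 1) - c k * a k|
        ≤ (1 / (n : ℝ)) * (a 1 * (c (n + 1) - c 1)
            + 2 * C * ((n : ℝ) * c (n + 1) - ∑ k ∈ Icc 1 n, c k)
            + (-c (n + 1)) * (C * n)) :=
          mul_le_mul_of_nonneg_left hsum (by positivity)
      _ = g n := by
          rw [hg]
          have : (1 / (n : ℝ)) * ((n : ℝ) * c (n + 1))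
              = c (n + 1) := by rw [← mul_assoc, h1n, one_mul]
          field_simp
  exact hgl

/-- Discrete l'Hôpital rule: if `b n / a n` converges monotonically to `L` and the
averages of `|a (k+1) - a k|` are bounded, then the averages of
`|(b (k+1) - b k) - L * (a (k+1) - a k)|` tend to `0`. -/
theorem discrete_lhopital (a b : ℕ → ℝ) (L : ℝ)
    (ha : ∀ n, 0 < a n)
    (hmono : Monotone (fun n => b n / a n) ∨ Antitone (fun n => b n / a n))
    (hlim : Filter.Tendsto (fun n => b n / a n) Filter.atTop (nhds L))
    (C : ℝ)
    (hC : ∀ n : ℕ, 0 < n →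
      (1 / (n : ℝ)) * ∑ k ∈ Finset.Icc 1 n, |a (k + 1) - a k| ≤ C) :
    Filter.Tendsto
      (fun n : ℕ => (1 / (n : ℝ)) *
        ∑ k ∈ Finset.Icc 1 n, |(b (k + 1) - b k) - L * (a (k + 1) - a k)|)
      Filter.atTop (nhds 0) := by
  have hS : ∀ n : ℕ, 0 < n → ∑ k ∈ Icc 1 n, |a (k + 1) - a k| ≤ C * n := by
    intro n hn
    have hn0 : (0 : ℝ) < n := by exact_mod_cast hn
    have h := hC n hn
    have := mul_le_mul_of_nonneg_left h hn0.le
    calc ∑ k ∈ Icc 1 n, |a (k + 1) - a k|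
        = (n : ℝ) * ((1 / (n : ℝ)) * ∑ k ∈ Icc 1 n, |a (k + 1) - a k|) := by
          field_simp
      _ ≤ (n : ℝ) * C := this
      _ = C * n := mul_comm _ _
  have hba : ∀ m : ℕ, (b m / a m - L) * a m = b m - L * a m := by
    intro m
    rw [sub_mul, div_mul_cancel₀ _ (ha m).ne']
  rcases hmono with hm | hm
  · set c : ℕ → ℝ := fun n => b n / a n - L with hc
    have hmc : Monotone c := fun i j h => sub_le_sub_right (hm h) L
    have hc0 : Tendsto c atTop (nhds 0) := by
      have := hlim.sub_const L
      simpa using this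
    have key : ∀ k : ℕ, (b (k + 1) - b k) - L * (a (k + 1) - a k)
        = c (k + 1) * a (k + 1) - c k * a k := by
      intro k
      simp only [hc]
      rw [hba (k + 1), hba k]
      ring
    have := aux a c ha hmc hc0 C hS
    convert this using 3 with n
    apply Finset.sum_congr rfl
    intro k _
    rw [key k]
  · set c : ℕ → ℝ := fun n => L - b n / a n with hc
    have hmc : Monotone c := fun i j h => sub_le_sub_left (hm h) L
    have hc0 : Tendsto c atTop (nhds 0) := by
      have := (tendsto_const_nhds (x := L)).sub hlim
      simpa using this
    have key : ∀ k : ℕ, (b (k + 1) - b k) - L * (a (k + 1) - a k)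
        = -(c (k + 1) * a (k + 1) - c k * a k) := by
      intro k
      simp only [hc]
      have e1 : (L - b (k+1) / a (k+1)) * a (k+1) = -((b (k+1) / a (k+1) - L) * a (k+1)) := by ring
      have e2 : (L - b k / a k) * a k = -((b k / a k - L) * a k) := by ring
      rw [e1, e2, hba (k + 1), hba k]
      ring
    have := aux a c ha hmc hc0 C hS
    convert this using 3 with n
    apply Finset.sum_congr rfl
    intro k _
    rw [key k, abs_neg]
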